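/- Let G be a long-refinement graph, p the minimal iteration in which all classes of π^p have size at most 2, and P_1 ≺ P_2 ≺ ... ≺ P_m the pairs of π^p ordered by the iteration in which they split into singletons. Then for all i ∈ [1, m−1], the bipartite graph between consecutive pairs P_i and P_{i+1} is a perfect matching: deg_{P_i}(P_{i+1}) = deg_{P_{i+1}}(P_i) = 1. -/
import Mathlib


variable {V : Type*}

/-- Colour Refinement equivalence: `crRel G i u v` means `u` and `v` get the same colour
after `i` iterations of Colour Refinement on `G` (starting monochromatic). -/
def crRel (G : SimpleGraph V) : ℕ → V → V → Prop
  | 0 => fun _ _ => True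
  | (i+1) => fun u v => crRel G i u v ∧ ∀ w : V,
      Nat.card {x : V // G.Adj u x ∧ crRel G i x w} =
      Nat.card {x : V // G.Adj v x ∧ crRel G i x w}

/-- The colour class of `v` after `i` iterations. -/
def crClass (G : SimpleGraph V) (i : ℕ) (v : V) : Set V :=
  {u : V | crRel G i u v}

/-- The partition `π^i` induced by the colouring after `i` iterations. -/
def crPartition (G : SimpleGraph V) (i : ℕ) : Set (Set V) :=
  {C : Set V | ∃ v : V, C = crClass G i v}

/-- `G` is a long-refinement graph: Colour Refinement takes exactly `n - 1` iterations
to stabilise. -/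
def IsLongRefinement [Fintype V] (G : SimpleGraph V) : Prop :=
  (∀ i < Fintype.card V - 1, crPartition G (i+1) ≠ crPartition G i) ∧
  crPartition G (Fintype.card V) = crPartition G (Fintype.card V - 1)

/-- The degree of a vertex. -/
noncomputable def vdeg (G : SimpleGraph V) (v : V) : ℕ :=
  Nat.card {u : V // G.Adj v u}

/-- `degOn G C C' k` : every vertex of `C` has exactly `k` neighbours in `C'`,
i.e. `deg_{C'}(C) = k`. -/
def degOn (G : SimpleGraph V) (C C' : Set V) (k : ℕ) : Prop :=
  ∀ v ∈ C, Nat.card {x : V // x ∈ C' ∧ G.Adj v x} = k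

/-- `C` is balanced with respect to `C'`: `deg_{C'}(C)` is defined. -/
def BalancedWrt (G : SimpleGraph V) (C C' : Set V) : Prop :=
  ∃ k, degOn G C C' k

namespace CRaux

variable {G : SimpleGraph V}

lemma crRel_refl (G : SimpleGraph V) (i : ℕ) (v : V) : crRel G i v v := by
  induction i with
  | zero => trivial
  | succ i ih => exact ⟨ih, fun w => rfl⟩

lemma crRel_symm {i : ℕ} {u v : V} (h : crRel G i u v) : crRel G i v u := by
  induction i with
  | zero => trivial
  | succ i ih => exact ⟨ih h.1, fun w => (h.2 w).symm⟩

lemma crRel_trans {i : ℕ} {u v w : V} (h : crRel G i u v) (h' : crRel G i v w) :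
    crRel G i u w := by
  induction i with
  | zero => trivial
  | succ i ih => exact ⟨ih h.1 h'.1, fun x => (h.2 x).trans (h'.2 x)⟩

lemma crRel_succ {i : ℕ} {u v : V} (h : crRel G (i+1) u v) : crRel G i u v := h.1

lemma crRel_mono {i k : ℕ} (hik : i ≤ k) {u v : V} (h : crRel G k u v) : crRel G i u v := by
  induction k with
  | zero => exact (Nat.le_zero.mp hik ▸ h)
  | succ k ih =>
    rcases Nat.lt_or_ge i (k+1) with hl | hg
    · exact ih (Nat.lt_succ_iff.mp hl) h.1
    · exact (Nat.le_antisymm hik hg) ▸ h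

lemma mem_crClass {i : ℕ} {u v : V} : u ∈ crClass G i v ↔ crRel G i u v := Iff.rfl

lemma crClass_eq {i : ℕ} {u v : V} (h : crRel G i u v) : crClass G i u = crClass G i v := by
  ext x
  exact ⟨fun hx => crRel_trans hx h, fun hx => crRel_trans hx (crRel_symm h)⟩

lemma rel_of_class_eq {i : ℕ} {u v : V} (h : crClass G i u = crClass G i v) :
    crRel G i u v := by
  have : u ∈ crClass G i v := h ▸ (crRel_refl G i u)
  exact this

lemma crClass_succ_subset {i : ℕ} (v : V) : crClass G (i+1) v ⊆ crClass G i v :=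
  fun _ hx => hx.1

lemma crClass_mono {i k : ℕ} (hik : i ≤ k) (v : V) : crClass G k v ⊆ crClass G i v :=
  fun _ hx => crRel_mono hik hx

lemma count_congr {i k : ℕ} {w w' : V}
    (h : ∀ x, crRel G i x w ↔ crRel G k x w') (v : V) :
    Nat.card {x : V // G.Adj v x ∧ crRel G i x w} =
    Nat.card {x : V // G.Adj v x ∧ crRel G k x w'} :=
  Nat.card_congr (Equiv.subtypeEquivRight fun x => by rw [h x])

/-- if a `j`-class survives to level `j+1`, the `(j+1)`-class of its rep equals it -/
lemma class_stable_of_mem {i : ℕ} {w : V}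
    (h : crClass G i w ∈ crPartition G (i+1)) :
    crClass G (i+1) w = crClass G i w := by
  obtain ⟨u, hu⟩ := h
  have hw : crRel G (i+1) w u := by
    have : w ∈ crClass G i w := crRel_refl G i w
    rw [hu] at this; exact this
  rw [crClass_eq hw, ← hu]

/-- partition equal at one step → relations equal at that step -/
lemma rel_iff_of_partition_eq {i : ℕ}
    (h : crPartition G (i+1) = crPartition G i) (u v : V) :
    crRel G (i+1) u v ↔ crRel G i u v := by
  have hcl : crClass G (i+1) v = crClass G i v := by
    have h1 : crClass G (i+1) v ∈ crPartition G i := by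
      rw [← h]; exact ⟨v, rfl⟩
    obtain ⟨w, hw⟩ := h1
    have hv : crRel G i v w := by
      have : v ∈ crClass G (i+1) v := crRel_refl G (i+1) v
      rw [hw] at this; exact this
    rw [hw, crClass_eq hv]
  constructor
  · exact fun h' => h'.1
  · intro h'
    have : u ∈ crClass G i v := h'
    rw [← hcl] at this; exact this

/-- stability propagates one step -/
lemma partition_stable_step {i : ℕ}
    (h : crPartition G (i+1) = crPartition G i) :
    crPartition G (i+2) = crPartition G (i+1) := by
  have hrel := rel_iff_of_partition_eq h
  have : ∀ u v, crRel G (i+2) u v ↔ crRel G (i+1) u v := by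
    intro u v
    constructor
    · exact fun h' => crRel_succ h'
    · intro h'
      refine ⟨h', fun w => ?_⟩
      have e1 := count_congr (G := G) (fun x => hrel x w) u
      have e2 := count_congr (G := G) (fun x => hrel x w) v
      rw [e1, e2]
      exact h'.2 w
  ext C
  constructor
  · rintro ⟨v, rfl⟩
    refine ⟨v, ?_⟩
    ext x; exact this x v
  · rintro ⟨v, rfl⟩
    refine ⟨v, ?_⟩
    ext x; exact (this x v).symm

end CRaux

namespace CRaux

open Classical

/-- the finset of colour classes at iteration `i` -/
noncomputable def clsF (G : SimpleGraph V) [Fintype V] (i : ℕ) : Finset (Set V) :=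
  Finset.univ.image (fun v => crClass G i v)

variable {G : SimpleGraph V} [Fintype V]

lemma mem_clsF {i : ℕ} {C : Set V} : C ∈ clsF G i ↔ C ∈ crPartition G i := by
  simp [clsF, crPartition, eq_comm]

/-- map sending an `(i+1)`-class to the `i`-class containing it -/
noncomputable def back (G : SimpleGraph V) (i : ℕ) (C : Set V) : Set V :=
  if h : ∃ v, C = crClass G (i+1) v then crClass G i h.choose else ∅

lemma back_class (i : ℕ) (v : V) : back G i (crClass G (i+1) v) = crClass G i v := by
  have h : ∃ u, crClass G (i+1) v = crClass G (i+1) u := ⟨v, rfl⟩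
  rw [back, dif_pos h]
  have hv : crRel G (i+1) v h.choose := by
    have : v ∈ crClass G (i+1) v := crRel_refl G (i+1) v
    rw [h.choose_spec] at this; exact this
  exact (crClass_eq (crRel_mono (Nat.le_succ i) hv)).symm

lemma clsF_eq_image (i : ℕ) : clsF G i = (clsF G (i+1)).image (back G i) := by
  rw [clsF, clsF, Finset.image_image]
  apply Finset.image_congr
  intro v _
  exact (back_class i v).symm

lemma clsF_card_mono (i : ℕ) : (clsF G i).card ≤ (clsF G (i+1)).card := by
  rw [clsF_eq_image i]
  exact Finset.card_image_le

lemma clsF_card_strict {i : ℕ} (h : crPartition G (i+1) ≠ crPartition G i) :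
    (clsF G i).card + 1 ≤ (clsF G (i+1)).card := by
  by_contra hc
  push_neg at hc
  have hle : (clsF G (i+1)).card ≤ (clsF G i).card := Nat.lt_succ_iff.mp hc
  have hcard : ((clsF G (i+1)).image (back G i)).card = (clsF G (i+1)).card := by
    rw [← clsF_eq_image i]
    exact le_antisymm (clsF_card_mono i) hle
  have hinj : Set.InjOn (back G i) (clsF G (i+1)) :=
    Finset.injOn_of_card_image_eq hcard
  apply h
  have hcl : ∀ v : V, crClass G (i+1) v = crClass G i v := by
    intro v
    apply Set.Subset.antisymm (crClass_succ_subset v)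
    intro u hu
    have h1 : back G i (crClass G (i+1) u) = back G i (crClass G (i+1) v) := by
      rw [back_class, back_class]
      exact crClass_eq hu
    have h2 : crClass G (i+1) u = crClass G (i+1) v := by
      apply hinj _ _ h1
      · exact mem_clsF.mpr ⟨u, rfl⟩
      · exact mem_clsF.mpr ⟨v, rfl⟩
    have : u ∈ crClass G (i+1) u := crRel_refl G (i+1) u
    rw [h2] at this
    exact this
  ext C
  constructor
  · rintro ⟨v, rfl⟩; exact ⟨v, (hcl v)⟩
  · rintro ⟨v, rfl⟩; exact ⟨v, (hcl v).symm⟩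

lemma clsF_card_le (i : ℕ) : (clsF G i).card ≤ Fintype.card V :=
  le_trans Finset.card_image_le (by simp)

lemma clsF_zero [Nonempty V] : (clsF G 0).card = 1 := by
  rw [clsF]
  have : (fun v : V => crClass G 0 v) = fun _ => (Set.univ : Set V) := by
    funext v; ext u; simp [crClass, crRel]
  rw [this, Finset.image_const Finset.univ_nonempty]
  simp


variable (hlr : IsLongRefinement G)

include hlr

/-- after iteration `n-1`, the partition is stable -/
lemma stable_after [Nonempty V] {k : ℕ} (hk : Fintype.card V - 1 ≤ k) :
    crPartition G (k+1) = crPartition G k := by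
  induction k with
  | zero =>
    have h0 : Fintype.card V - 1 = 0 := Nat.le_zero.mp hk
    have h1 : Fintype.card V = 1 := by
      have := Fintype.card_pos (α := V); omega
    have := hlr.2
    rw [h1] at this
    simpa using this
  | succ k ih =>
    rcases Nat.lt_or_ge (Fintype.card V - 1) (k+1) with hl | hg
    · exact partition_stable_step (ih (Nat.lt_succ_iff.mp hl))
    · have hke : Fintype.card V - 1 = k + 1 := le_antisymm hk hg
      have := hlr.2
      have hcv : Fintype.card V = k + 2 := by
        have := Fintype.card_pos (α := V); omega
      rw [hcv] at this
      simpa using this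

lemma clsF_card_ge [Nonempty V] {k : ℕ} (hk : k ≤ Fintype.card V - 1) :
    k + 1 ≤ (clsF G k).card := by
  induction k with
  | zero => rw [clsF_zero]
  | succ k ih =>
    have h1 : k + 1 ≤ (clsF G k).card := ih (by omega)
    have h2 := clsF_card_strict (hlr.1 k (by omega))
    omega

lemma clsF_card_eq [Nonempty V] {k : ℕ} (hk : k ≤ Fintype.card V - 1) :
    (clsF G k).card = k + 1 := by
  refine le_antisymm ?_ (clsF_card_ge hlr hk)
  -- c k + ((n-1) - k) ≤ c (n-1) ≤ n
  have key : ∀ d k : ℕ, k + d ≤ Fintype.card V - 1 →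
      (clsF G k).card + d ≤ (clsF G (k+d)).card := by
    intro d
    induction d with
    | zero => intro k _; simp
    | succ d ih =>
      intro k hkd
      have h1 := ih k (by omega)
      have h2 := clsF_card_strict (hlr.1 (k+d) (by omega))
      have : k + (d+1) = (k+d) + 1 := by omega
      rw [this]
      omega
  have h3 := key (Fintype.card V - 1 - k) k (by omega)
  have h4 : k + (Fintype.card V - 1 - k) = Fintype.card V - 1 := by omega
  rw [h4] at h3
  have h5 := clsF_card_le (G := G) (Fintype.card V - 1)
  have := Fintype.card_pos (α := V)
  omega

omit hlr in
/-- a split class has two distinct child classes -/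
lemma split_children {i : ℕ} {C : Set V} (hC : C ∈ crPartition G i)
    (hC' : C ∉ crPartition G (i+1)) :
    ∃ a b : V, C = crClass G i a ∧ b ∈ C ∧ ¬ crRel G (i+1) b a := by
  obtain ⟨a, rfl⟩ := hC
  have hex : ∃ b ∈ crClass G i a, ¬ crRel G (i+1) b a := by
    by_contra hb
    push_neg at hb
    exact hC' ⟨a, Set.Subset.antisymm (fun b hbC => hb b hbC) (crClass_succ_subset a)⟩
  obtain ⟨b, hb1, hb2⟩ := hex
  exact ⟨a, b, rfl, hb1, hb2⟩

/-- only one class splits at each step -/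
lemma split_unique [Nonempty V] {i : ℕ} (hi : i + 1 ≤ Fintype.card V - 1)
    {P R : Set V} (hP : P ∈ crPartition G i) (hP' : P ∉ crPartition G (i+1))
    (hR : R ∈ crPartition G i) (hR' : R ∉ crPartition G (i+1)) : P = R := by
  by_contra hne
  obtain ⟨a, b, hPa, hbP, hba⟩ := split_children hP hP'
  obtain ⟨a', b', hRa, hbR, hba'⟩ := split_children hR hR'
  set D1 := crClass G (i+1) a with hD1
  set D2 := crClass G (i+1) b with hD2
  set E1 := crClass G (i+1) a' with hE1
  set E2 := crClass G (i+1) b' with hE2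
  have hbackD1 : back G i D1 = P := by rw [hD1, back_class, ← hPa]
  have hbackD2 : back G i D2 = P := by
    rw [hD2, back_class, crClass_eq (show crRel G i b a by rw [hPa] at hbP; exact hbP), ← hPa]
  have hbackE1 : back G i E1 = R := by rw [hE1, back_class, ← hRa]
  have hbackE2 : back G i E2 = R := by
    rw [hE2, back_class, crClass_eq (show crRel G i b' a' by rw [hRa] at hbR; exact hbR), ← hRa]
  have hD12 : D1 ≠ D2 := by
    intro hEq
    apply hba
    have : b ∈ D2 := crRel_refl G (i+1) b
    rw [← hEq] at this
    exact this
  have hE12 : E1 ≠ E2 := by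
    intro hEq
    apply hba'
    have : b' ∈ E2 := crRel_refl G (i+1) b'
    rw [← hEq] at this
    exact this
  have hD1E2 : D1 ≠ E2 := fun hEq => hne (by rw [← hbackD1, hEq, hbackE2])
  have hE1D2 : E1 ≠ D2 := fun hEq => hne (by rw [← hbackD2, ← hEq, hbackE1])
  have hE2D2 : E2 ≠ D2 := fun hEq => hne (by rw [← hbackD2, ← hEq, hbackE2])
  set T := clsF G (i+1) with hT
  set T'' := (T.erase D2).erase E2 with hT''
  have hD2T : D2 ∈ T := mem_clsF.mpr ⟨b, hD2⟩
  have hE2T : E2 ∈ T := mem_clsF.mpr ⟨b', hE2⟩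
  have hsurj : Set.SurjOn (back G i) (T'' : Set (Set V)) ((clsF G i : Finset (Set V)) : Set (Set V)) := by
    intro C hC
    obtain ⟨v, hv⟩ := mem_clsF.mp (by exact_mod_cast hC)
    by_cases hCP : C = P
    · refine ⟨D1, ?_, by rw [hbackD1, hCP]⟩
      simp only [hT'', Finset.coe_erase, Set.mem_diff, Set.mem_singleton_iff]
      exact ⟨⟨by exact_mod_cast mem_clsF.mpr ⟨a, hD1⟩, by simpa using hD12⟩, hD1E2⟩
    · by_cases hCR : C = R
      · refine ⟨E1, ?_, by rw [hbackE1, hCR]⟩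
        simp only [hT'', Finset.coe_erase, Set.mem_diff, Set.mem_singleton_iff]
        exact ⟨⟨by exact_mod_cast mem_clsF.mpr ⟨a', hE1⟩, by simpa using hE1D2⟩, hE12⟩
      · refine ⟨crClass G (i+1) v, ?_, by rw [back_class, ← hv]⟩
        have hb : back G i (crClass G (i+1) v) = C := by rw [back_class, ← hv]
        simp only [hT'', Finset.coe_erase, Set.mem_diff, Set.mem_singleton_iff]
        refine ⟨⟨by exact_mod_cast mem_clsF.mpr ⟨v, rfl⟩, ?_⟩, ?_⟩
        · simpa using fun hEq => hCP (by rw [← hb, hEq, hbackD2])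
        · exact fun hEq => hCR (by rw [← hb, hEq, hbackE2])
  have hcard : (clsF G i).card ≤ T''.card := Finset.card_le_card_of_surjOn _ hsurj
  have hT''card : T''.card = T.card - 2 := by
    rw [hT'', Finset.card_erase_of_mem (Finset.mem_erase.mpr ⟨hE2D2, hE2T⟩),
      Finset.card_erase_of_mem hD2T]
    omega
  have h1 : (clsF G i).card = i + 1 := clsF_card_eq hlr (by omega)
  have h2 : T.card = i + 2 := clsF_card_eq hlr (by omega)
  omega

omit hlr in
lemma card_eq_single (q : V → Prop) (w : V) :
    Nat.card {x : V // q x ∧ x = w} = if q w then 1 else 0 := by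
  split_ifs with h
  · rw [Nat.card_eq_one_iff_unique]
    exact ⟨⟨fun a b => Subtype.ext (a.2.2.trans b.2.2.symm)⟩, ⟨⟨w, h, rfl⟩⟩⟩
  · have he : IsEmpty {x : V // q x ∧ x = w} := ⟨fun x => h (x.2.2 ▸ x.2.1)⟩
    exact Nat.card_of_isEmpty

omit hlr in
lemma card_eq_pair (q : V → Prop) {a b : V} (hab : a ≠ b) :
    Nat.card {x : V // q x ∧ (x = a ∨ x = b)} =
      (if q a then 1 else 0) + (if q b then 1 else 0) := by
  have h1 : {x : V | q x ∧ (x = a ∨ x = b)} =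
      {x : V | q x ∧ x = a} ∪ {x : V | q x ∧ x = b} := by
    ext x; simp only [Set.mem_setOf_eq, Set.mem_union]; tauto
  have hda : ({x : V | q x ∧ x = a}).Finite :=
    Set.Finite.subset (Set.finite_singleton a) (fun x hx => hx.2)
  have hdb : ({x : V | q x ∧ x = b}).Finite :=
    Set.Finite.subset (Set.finite_singleton b) (fun x hx => hx.2)
  have hdisj : Disjoint {x : V | q x ∧ x = a} {x : V | q x ∧ x = b} := by
    rw [Set.disjoint_left]
    rintro x ⟨-, rfl⟩ ⟨-, hxb⟩
    exact hab hxb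
  calc Nat.card {x : V // q x ∧ (x = a ∨ x = b)}
      = ({x : V | q x ∧ (x = a ∨ x = b)}).ncard := Nat.card_coe_set_eq _
    _ = ({x : V | q x ∧ x = a}).ncard + ({x : V | q x ∧ x = b}).ncard := by
        rw [h1, Set.ncard_union_eq hdisj hda hdb]
    _ = Nat.card {x : V // q x ∧ x = a} + Nat.card {x : V // q x ∧ x = b} :=
        (congrArg₂ (· + ·) (Nat.card_coe_set_eq _) (Nat.card_coe_set_eq _)).symm
    _ = _ := by rw [card_eq_single q a, card_eq_single q b]

omit hlr in
lemma class_ncard_le {p i : ℕ} (hpi : p ≤ i)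
    (hp : ∀ C ∈ crPartition G p, C.ncard ≤ 2) (v : V) : (crClass G i v).ncard ≤ 2 :=
  le_trans (Set.ncard_le_ncard (crClass_mono hpi v) (Set.toFinite _)) (hp _ ⟨v, rfl⟩)

omit hlr in
lemma class_eq_pair {i : ℕ} {a b : V} (hb : b ∈ crClass G i a) (hab : b ≠ a)
    (h2 : (crClass G i a).ncard ≤ 2) : crClass G i a = {a, b} := by
  refine (Set.eq_of_subset_of_ncard_le ?_ ?_ (Set.toFinite _)).symm
  · intro x hx
    rcases hx with rfl | hx
    · exact crRel_refl G i _
    · rw [Set.mem_singleton_iff] at hx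
      subst hx; exact hb
  · rw [Set.ncard_pair (Ne.symm hab)]
    exact h2

omit hlr in
lemma child_singleton {i : ℕ} {a b : V} (hcl : crClass G i a = {a, b})
    (hba : ¬ crRel G (i+1) b a) : crClass G (i+1) a = {a} := by
  apply Set.Subset.antisymm
  · intro x hx
    have hx' : x ∈ crClass G i a := crClass_succ_subset a hx
    rw [hcl] at hx'
    rcases hx' with rfl | hx'
    · exact Set.mem_singleton _
    · rw [Set.mem_singleton_iff] at hx'
      subst hx'
      exact absurd hx hba
  · intro x hx
    rw [Set.mem_singleton_iff] at hx
    subst hx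
    exact crRel_refl G (i+1) _

end CRaux

open CRaux in
/-- Consecutive pairs in the splitting order are joined by a perfect matching:
if the pair `P` splits in iteration `j+1` and the pair `Q` splits in iteration
`j+2` (with `j ≥ p`), then `deg_P(Q) = deg_Q(P) = 1`. -/
theorem consecutive_pairs_matching [Fintype V] (G : SimpleGraph V)
    (h : IsLongRefinement G) (p : ℕ)
    (hp : ∀ C ∈ crPartition G p, C.ncard ≤ 2)
    (hpmin : ∀ q < p, ∃ C ∈ crPartition G q, 2 < C.ncard)
    (j : ℕ) (hj : p ≤ j) (P Q : Set V)
    (hP : P ∈ crPartition G j) (hP' : P ∉ crPartition G (j+1))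
    (hQ : Q ∈ crPartition G (j+1)) (hQ' : Q ∉ crPartition G (j+2)) :
    degOn G Q P 1 ∧ degOn G P Q 1 := by
  classical
  obtain ⟨a0, hPa0⟩ := hP
  haveI : Nonempty V := ⟨a0⟩
  have hP : P ∈ crPartition G j := ⟨a0, hPa0⟩
  have hne12 : crPartition G (j+2) ≠ crPartition G (j+1) := by
    intro hEq; exact hQ' (by rw [hEq]; exact hQ)
  have hj2 : j + 2 ≤ Fintype.card V - 1 := by
    by_contra hc
    exact hne12 (stable_after h (by omega))
  -- split P into singletons {a}, {b}
  obtain ⟨a, b, hPa, hbP, hba⟩ := split_children hP hP'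
  have hab : b ≠ a := fun hEq => hba (hEq ▸ crRel_refl G (j+1) a)
  have hbmem : b ∈ crClass G j a := by rw [← hPa]; exact hbP
  have hP2 : crClass G j a = {a, b} := class_eq_pair hbmem hab (class_ncard_le hj hp a)
  have hcl1a : crClass G (j+1) a = {a} := child_singleton hP2 hba
  have hP2b : crClass G j b = {b, a} := by
    rw [crClass_eq (show crRel G j b a from hbmem), hP2, Set.pair_comm]
  have hcl1b : crClass G (j+1) b = {b} :=
    child_singleton hP2b (fun hEq => hba (crRel_symm hEq))
  -- split Q
  obtain ⟨u, d, hQu, hdQ, hdu⟩ := split_children hQ hQ'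
  have hdu1 : crRel G (j+1) d u := by rw [hQu] at hdQ; exact hdQ
  have hdune : d ≠ u := fun hEq => hdu (hEq ▸ crRel_refl G (j+2) u)
  have hQ2 : Q = {u, d} := by
    rw [hQu]
    exact class_eq_pair (by rw [← hQu]; exact hdQ) hdune
      (class_ncard_le (by omega) hp u)
  -- a distinguishing vertex w
  have hw : ∃ w, Nat.card {x : V // G.Adj d x ∧ crRel G (j+1) x w} ≠
      Nat.card {x : V // G.Adj u x ∧ crRel G (j+1) x w} := by
    by_contra hc
    push_neg at hc
    exact hdu ⟨hdu1, hc⟩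
  obtain ⟨w, hw⟩ := hw
  -- the class of w at level j must be the split class P
  have hwP : crClass G j w = P := by
    by_cases hmem : crClass G j w ∈ crPartition G (j+1)
    · exfalso
      have hst : crClass G (j+1) w = crClass G j w := class_stable_of_mem hmem
      have hiff : ∀ x, crRel G (j+1) x w ↔ crRel G j x w := by
        intro x
        constructor
        · intro hx
          have hx' : x ∈ crClass G (j+1) w := hx
          rw [hst] at hx'; exact hx'
        · intro hx
          have hx' : x ∈ crClass G j w := hx
          rw [← hst] at hx'; exact hx'
      apply hw
      rw [count_congr hiff d, count_congr hiff u]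
      exact hdu1.2 w
    · exact split_unique h (by omega) ⟨w, rfl⟩ hmem hP hP'
  have hwab : w = a ∨ w = b := by
    have hww : w ∈ crClass G j w := crRel_refl G j w
    rw [hwP, hPa, hP2] at hww
    simpa using hww
  have hclw : crClass G (j+1) w = {w} := by
    rcases hwab with rfl | rfl
    exacts [hcl1a, hcl1b]
  have hiffw : ∀ x, crRel G (j+1) x w ↔ x = w := by
    intro x
    constructor
    · intro hx
      have hx' : x ∈ crClass G (j+1) w := hx
      rw [hclw] at hx'; simpa using hx'
    · rintro rfl; exact crRel_refl G (j+1) x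
  have hcd : Nat.card {x : V // G.Adj d x ∧ crRel G (j+1) x w} =
      Nat.card {x : V // G.Adj d x ∧ x = w} :=
    Nat.card_congr (Equiv.subtypeEquivRight (fun x => by rw [hiffw x]))
  have hcu : Nat.card {x : V // G.Adj u x ∧ crRel G (j+1) x w} =
      Nat.card {x : V // G.Adj u x ∧ x = w} :=
    Nat.card_congr (Equiv.subtypeEquivRight (fun x => by rw [hiffw x]))
  have hw' : (if G.Adj d w then 1 else 0) ≠ (if G.Adj u w then 1 else 0) := by
    intro hEq
    apply hw
    rw [hcd, hcu, card_eq_single (G.Adj d ·) w, card_eq_single (G.Adj u ·) w, hEq]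
  -- degrees into P at level j agree
  have hiffP : ∀ x, crRel G j x a ↔ (x = a ∨ x = b) := by
    intro x
    constructor
    · intro hx
      have hx' : x ∈ crClass G j a := hx
      rw [hP2] at hx'; simpa using hx'
    · rintro (rfl | rfl)
      · exact crRel_refl G j x
      · exact hbmem
  have eP : ∀ v : V, Nat.card {x : V // G.Adj v x ∧ crRel G j x a} =
      (if G.Adj v a then 1 else 0) + (if G.Adj v b then 1 else 0) := by
    intro v
    have e : Nat.card {x : V // G.Adj v x ∧ crRel G j x a} =
        Nat.card {x : V // G.Adj v x ∧ (x = a ∨ x = b)} :=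
      Nat.card_congr (Equiv.subtypeEquivRight (fun x => by rw [hiffP x]))
    rw [e, card_eq_pair _ (Ne.symm hab)]
  have hsum : (if G.Adj d a then 1 else 0) + (if G.Adj d b then 1 else 0)
      = (if G.Adj u a then 1 else 0) + (if G.Adj u b then 1 else 0) := by
    rw [← eP d, ← eP u]
    exact hdu1.2 a
  have key : (if G.Adj u a then 1 else 0) + (if G.Adj u b then 1 else 0) = 1 ∧
      (if G.Adj d a then 1 else 0) + (if G.Adj d b then 1 else 0) = 1 ∧
      (if G.Adj u a then 1 else 0) + (if G.Adj d a then 1 else 0) = 1 ∧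
      (if G.Adj u b then 1 else 0) + (if G.Adj d b then 1 else 0) = 1 := by
    rcases hwab with rfl | rfl <;> split_ifs at hsum hw' ⊢ <;> omega
  obtain ⟨k1, k2, k3, k4⟩ := key
  constructor
  · intro v hv
    rw [hQ2] at hv
    have hmemP : ∀ x, x ∈ P ↔ (x = a ∨ x = b) := by
      intro x; rw [hPa, hP2]; simp
    have e : Nat.card {x : V // x ∈ P ∧ G.Adj v x} =
        Nat.card {x : V // G.Adj v x ∧ (x = a ∨ x = b)} :=
      Nat.card_congr (Equiv.subtypeEquivRight (fun x => by rw [hmemP x]; exact and_comm))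
    rw [e, card_eq_pair _ (Ne.symm hab)]
    simp only [Set.mem_insert_iff, Set.mem_singleton_iff] at hv
    rcases hv with rfl | rfl
    · exact k1
    · exact k2
  · intro v hv
    rw [hPa, hP2] at hv
    have hmemQ : ∀ x, x ∈ Q ↔ (x = u ∨ x = d) := by
      intro x; rw [hQ2]; simp
    have e : Nat.card {x : V // x ∈ Q ∧ G.Adj v x} =
        Nat.card {x : V // G.Adj v x ∧ (x = u ∨ x = d)} :=
      Nat.card_congr (Equiv.subtypeEquivRight (fun x => by rw [hmemQ x]; exact and_comm))
    rw [e, card_eq_pair _ (Ne.symm hdune)]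
    simp only [Set.mem_insert_iff, Set.mem_singleton_iff] at hv
    rcases hv with rfl | rfl
    · simp only [G.adj_comm v u, G.adj_comm v d]
      exact k3
    · simp only [G.adj_comm v u, G.adj_comm v d]
      exact k4
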